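/- For every x ∈ {1,...,n}, one has r_0(x) = -Σ_{j=2}^{x} r_1(j). -/

import Mathlib

open Finset

namespace Secretary

/-- Binomial coefficient on integers: zero when `b < 0` or `b > a`. -/
noncomputable def Cb (a b : ℤ) : ℝ :=
  if 0 ≤ b ∧ b ≤ a then (Nat.choose a.toNat b.toNat : ℝ) else 0

/-- The value `π(i)` of a permutation of `{1,...,n}` in 1-based indexing. -/
def pv (n : ℕ) (π : Equiv.Perm (Fin n)) (i : ℕ) : ℕ :=
  if h : i - 1 < n then ((π ⟨i - 1, h⟩ : Fin n) : ℕ) + 1 else 0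

/-- The relative rank `ρ_π(i)`: the number of `j ∈ {1,...,i}` with `π(j) ≤ π(i)`. -/
def rho (n : ℕ) (π : Equiv.Perm (Fin n)) (i : ℕ) : ℕ :=
  ((Finset.Icc 1 i).filter fun j => pv n π j ≤ pv n π i).card

/-- Extension of a sequence `s` with `s (k+1) = n - 1`. -/
def sExt (n k : ℕ) (s : ℕ → ℕ) (l : ℕ) : ℕ := if l = k + 1 then n - 1 else s l

/-- `i` is a `(π, l, w)`-element. -/
def IsElem (n k : ℕ) (s : ℕ → ℕ) (π : Equiv.Perm (Fin n)) (l i : ℕ) : Prop :=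
  sExt n k s l < i ∧ i ≤ sExt n k s (l + 1) ∧ rho n π i ≤ l

/-- `l` is a `w`-threshold of `π`. -/
def IsThreshold (n k : ℕ) (s : ℕ → ℕ) (π : Equiv.Perm (Fin n)) (l : ℕ) : Prop :=
  1 ≤ l ∧ l ≤ k ∧ ∃ i, IsElem n k s π l i

open Classical in
/-- `π` is a lucky permutation for the sequence `w = s`. -/
def Lucky (n k : ℕ) (s : ℕ → ℕ) (π : Equiv.Perm (Fin n)) : Prop :=
  if ∃ l, IsThreshold n k s π l then
    pv n π (sInf {i | IsElem n k s π (sInf {l | IsThreshold n k s π l}) i}) ≤ k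
  else pv n π n ≤ k

/-- The maps `r_l` (first argument an integer `l ≤ k`). -/
noncomputable def rr (n k : ℕ) (l : ℤ) (x : ℕ) : ℝ :=
  if l < 0 then 0
  else if l = 0 then
    1 / (x : ℝ) - (k : ℝ) / n - Cb ((n : ℤ) - x - 1) k / ((x : ℝ) * Cb n k)
      - (1 / Cb n k) * ∑ j ∈ Finset.Icc 1 x, Cb ((n : ℤ) - j - 1) ((k : ℤ) - 1) / (j : ℝ)
  else
    ((Nat.factorial (x - l.toNat - 1) : ℝ) / (Nat.factorial x : ℝ)) *
      (1 - (1 / ((l : ℝ) * Cb n x)) *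
        ∑ j ∈ Finset.range (l.toNat + 1),
          ((l : ℝ) - j) * Cb k j * Cb ((n : ℤ) - k) ((x : ℤ) - j))

/-- The constant `δ_{k,n}`. -/
noncomputable def delta (n k : ℕ) : ℝ :=
  if k = 1 then -(1 / (n : ℝ)) * ∑ j ∈ Finset.Icc 1 (n - 1), (1 : ℝ) / j
  else (Nat.factorial (n - k) : ℝ) / (Nat.factorial n : ℝ)

/-- The maps `d_l` for `0 ≤ l ≤ k`. -/
noncomputable def d (n k : ℕ) (l x : ℕ) : ℝ :=
  if l = 0 then
    -1 + (k : ℝ) * x / n + Cb ((n : ℤ) - x - 1) k / Cb n k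
      + ((x : ℝ) / Cb n k) * ∑ j ∈ Finset.Icc 1 x, Cb ((n : ℤ) - j - 1) ((k : ℤ) - 1) / (j : ℝ)
  else if l = 1 then
    -((k : ℝ) / n) - (1 / Cb n k) * ∑ j ∈ Finset.Icc 1 x, Cb ((n : ℤ) - j - 1) ((k : ℤ) - 1) / (j : ℝ)
  else
    ((k : ℝ) * (Nat.factorial x : ℝ) * (Nat.factorial (n - l - x) : ℝ) /
        ((l : ℝ) * ((l : ℝ) - 1) * (Nat.factorial n : ℝ))) *
      ∑ j ∈ Finset.range (l - 1), Cb ((k : ℤ) - 1) j * Cb ((n : ℤ) - k) ((x : ℤ) + l - j - 1)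

/-- The maps `c_l(x) = d_l(x - l)`. -/
noncomputable def c (n k l x : ℕ) : ℝ := d n k l (x - l)

/-- The constant `ξ_{k,n}`. -/
noncomputable def xi (n k : ℕ) : ℝ :=
  (k : ℝ) * (Nat.factorial (n - k - 1) : ℝ) / (Nat.factorial n : ℝ)

/-- `w` (given as a 1-indexed function) is a word in `X^{(k-l)}`, i.e. its `j`-th letter
belongs to `X_{l+j} = {l+j, ..., n-1}` for `1 ≤ j ≤ k - l`. -/
def memX (n k l : ℕ) (w : ℕ → ℕ) : Prop :=
  ∀ j ∈ Finset.Icc 1 (k - l), l + j ≤ w j ∧ w j ≤ n - 1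

/-- The left-shift operator removing the first `l` letters of a word. -/
def shift (l : ℕ) (w : ℕ → ℕ) : ℕ → ℕ := fun j => w (l + j)

/-- The maps `R_{l,j}`. -/
noncomputable def Rmap (n k l : ℕ) (w : ℕ → ℕ) (j : ℕ) : ℝ :=
  if 1 ≤ j ∧ j ≤ k - l then
    rr n k ((l : ℤ) + j - 1) (w j)
      - rr n k ((l : ℤ) + j - 1) (if j = k - l then n - 1 else w (j + 1))
  else 0

/-- The maps `Γ_{l,j,j'}`. -/
noncomputable def Gam (n k l j j' : ℕ) (w : ℕ → ℕ) : ℝ :=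
  if 1 ≤ j ∧ j ≤ j' ∧ j' ≤ k - l then
    ∏ t ∈ Finset.Icc j j', ((w t : ℝ) - l - t + 1)
  else 1

/-- The maps `T_l`. -/
noncomputable def Tmap (n k l : ℕ) (w : ℕ → ℕ) : ℝ :=
  (∑ j ∈ Finset.Icc 1 (k - l), Rmap n k l w j * Gam n k l 1 j w)
    + xi n k * Gam n k l 1 (k - l) w

/-- The maps `D_l(w) = r_{l-1}(x_1) - T_l(w)`, with `x_1 := n-1` when `l = k`. -/
noncomputable def Dmap (n k l : ℕ) (w : ℕ → ℕ) : ℝ :=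
  rr n k ((l : ℤ) - 1) (if l = k then n - 1 else w 1) - Tmap n k l w

/-- The maps `F_{l,w}(x) = -c_{l-1}(x) - x·D_l(w)`. -/
noncomputable def Fmap (n k l : ℕ) (w : ℕ → ℕ) (x : ℕ) : ℝ :=
  -(c n k (l - 1) x) - (x : ℝ) * Dmap n k l w

/-- The maps `a_l`. -/
noncomputable def amap (n k l x : ℕ) : ℝ :=
  (1 / Cb n x) * ∑ j ∈ Finset.range (l + 1), Cb k j * Cb ((n : ℤ) - k) ((x : ℤ) - j)

/-- The maps `b_l`. -/
noncomputable def bmap (n k l x : ℕ) : ℝ :=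
  (1 / ((l : ℝ) * Cb n x)) *
    ∑ j ∈ Finset.range (l + 1), (j : ℝ) * Cb k j * Cb ((n : ℤ) - k) ((x : ℤ) - j)

/-- `π ∈ S(l0, i0)`: `π` is lucky for `s`, `l0` is the smallest `s`-threshold of `π`,
and `i0` is the smallest `(π, l0, s)`-element. -/
def SMem (n k : ℕ) (s : ℕ → ℕ) (l0 i0 : ℕ) (π : Equiv.Perm (Fin n)) : Prop :=
  Lucky n k s π ∧ IsLeast {l | IsThreshold n k s π l} l0 ∧
    IsLeast {i | IsElem n k s π l0 i} i0

/-- `π ∈ S(Y, Y', l0, i0)`. -/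
def SYYMem (n k : ℕ) (s : ℕ → ℕ) (Y Y' : Finset ℕ) (l0 i0 : ℕ) (π : Equiv.Perm (Fin n)) :
    Prop :=
  SMem n k s l0 i0 π ∧ ((Finset.Icc 1 i0).image (pv n π)) ∩ Finset.Icc 1 k = Y ∧
    ((Finset.Icc 1 i0).image (pv n π)) ∩ Finset.Icc (k + 1) n = Y'

lemma Cb_natCast (a b : ℕ) : Cb a b = (a.choose b : ℝ) := by
  unfold Cb
  split
  · simp
  · next h =>
    push_neg at h
    have : a < b := by exact_mod_cast h (by positivity)
    rw [Nat.choose_eq_zero_of_lt this]; simp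

lemma Cb_neg_left (a b : ℤ) (ha : a < 0) : Cb a b = 0 := by
  unfold Cb
  rw [if_neg]; rintro ⟨h1, h2⟩; omega

lemma Cb_pascal (a b : ℤ) (hb : 1 ≤ b) : Cb (a + 1) b = Cb a b + Cb a (b - 1) := by
  rcases lt_or_ge a 0 with ha | ha
  · rw [Cb_neg_left a b ha, Cb_neg_left a _ ha]
    rcases lt_or_ge (a+1) 0 with h | h
    · rw [Cb_neg_left _ _ h]; ring
    · have ha0 : a = -1 := by omega
      subst ha0
      unfold Cb
      rw [if_neg]; · ring
      rintro ⟨h1, h2⟩; omega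
  · obtain ⟨m, rfl⟩ := Int.eq_ofNat_of_zero_le ha
    obtain ⟨c, rfl⟩ := Int.eq_ofNat_of_zero_le (by omega : (0:ℤ) ≤ b)
    have hc : 1 ≤ c := by exact_mod_cast hb
    obtain ⟨c, rfl⟩ := Nat.exists_eq_add_of_le hc
    have h1 : ((m:ℤ) + 1) = ((m+1 : ℕ) : ℤ) := by push_cast; ring
    have h2 : ((1 + c:ℕ):ℤ) - 1 = ((c:ℕ):ℤ) := by push_cast; ring
    rw [h1, h2, Cb_natCast, Cb_natCast, Cb_natCast]
    have : (1 + c) = c + 1 := by ring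
    rw [this, Nat.choose_succ_succ]
    push_cast; ring

lemma choose_inter (n a b : ℕ) :
    n.choose a * (n - a).choose b = n.choose b * (n - b).choose a := by
  rcases le_or_gt (a + b) n with h | h
  · have h1 := Nat.choose_mul (n := n) (k := a + b) (s := a) (by omega)
    have h2 := Nat.choose_mul (n := n) (k := a + b) (s := b) (by omega)
    rw [Nat.add_sub_cancel_left] at h1
    rw [Nat.add_sub_cancel] at h2
    have h3 : (a+b).choose a = (a+b).choose b := by
      rw [← Nat.choose_symm (by omega)]; congr 1; omega
    rw [← h1, ← h2, h3]
  · have hz : ∀ p q : ℕ, p + q > n → n.choose p * (n - p).choose q = 0 := by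
      intro p q hpq
      rcases le_or_gt p n with hp | hp
      · rw [Nat.choose_eq_zero_of_lt (by omega : n - p < q)]; ring
      · rw [Nat.choose_eq_zero_of_lt hp]; ring
    rw [hz a b h, hz b a (by omega)]

lemma rr_zero (n k x : ℕ) : rr n k 0 x =
    1 / (x : ℝ) - (k : ℝ) / n - Cb ((n : ℤ) - x - 1) k / ((x : ℝ) * Cb n k)
      - (1 / Cb n k) * ∑ j ∈ Finset.Icc 1 x, Cb ((n : ℤ) - j - 1) ((k : ℤ) - 1) / (j : ℝ) := by
  simp [rr]

lemma rr_one (n k x : ℕ) (hx : 2 ≤ x) : rr n k 1 x =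
    (1 / ((x : ℝ) * ((x:ℝ) - 1))) * (1 - Cb ((n:ℤ) - k) x / Cb n x) := by
  rw [rr, if_neg (by norm_num), if_neg (by norm_num)]
  have h1 : (1:ℤ).toNat = 1 := rfl
  rw [h1, Finset.sum_range_succ, Finset.sum_range_succ, Finset.sum_range_zero]
  obtain ⟨y, rfl⟩ := Nat.exists_eq_add_of_le hx
  have hk0 : Cb k 0 = 1 := by
    rw [(by norm_cast : ((0:ℕ):ℤ) = (0:ℤ)).symm, Cb_natCast]; simp
  have hfac : ((2 + y).factorial : ℝ) = ((2:ℝ)+y) * ((2:ℝ)+y - 1) * ((2 + y - 1 - 1).factorial : ℝ) := by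
    have h2 : 2 + y - 1 - 1 = y := by omega
    have h3 : (2 + y) = y + 2 := by omega
    rw [h2, h3, Nat.factorial_succ, Nat.factorial_succ]
    push_cast; ring
  rw [hfac]
  push_cast
  simp only [Int.cast_one, Int.cast_zero, Nat.cast_zero, sub_zero, sub_self, zero_mul,
    zero_add, add_zero, one_mul, mul_one, mul_zero]
  rw [hk0]
  have hfacne : ((2 + y - 1 - 1).factorial : ℝ) ≠ 0 := by positivity
  rw [show ((2:ℝ)+↑y) * ((2:ℝ)+↑y-1) * ((2 + y - 1 - 1).factorial : ℝ)
      = ((2 + y - 1 - 1).factorial : ℝ) * (((2:ℝ)+↑y) * ((2:ℝ)+↑y-1)) by ring,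
    div_mul_eq_div_div, div_self hfacne]
  ring

lemma Cb_nk_ne (n k : ℕ) (hkn : k ≤ n) : Cb n k ≠ 0 := by
  rw [Cb_natCast]
  exact_mod_cast (Nat.choose_pos hkn).ne'

lemma step (n k x : ℕ) (hk : 1 ≤ k) (hkn : k < n) (hx : 1 ≤ x) (hxn : x + 1 ≤ n) :
    rr n k 0 (x + 1) = rr n k 0 x - rr n k 1 (x + 1) := by
  rw [rr_zero, rr_zero, rr_one _ _ _ (by omega),
    Finset.sum_Icc_succ_top (by omega : 1 ≤ x + 1)]
  push_cast
  rw [show (n:ℤ) - ((x:ℤ) + 1) - 1 = (n:ℤ) - x - 2 from by ring]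
  have ha : Cb n k ≠ 0 := Cb_nk_ne n k hkn.le
  have hb : Cb (n:ℤ) ((x:ℤ)+1) ≠ 0 := by
    rw [show ((x:ℤ)+1) = ((x+1:ℕ):ℤ) from by push_cast; ring]
    exact Cb_nk_ne n (x+1) hxn
  have hP : Cb ((n:ℤ)-x-1) k = Cb ((n:ℤ)-x-2) k + Cb ((n:ℤ)-x-2) ((k:ℤ)-1) := by
    have h := Cb_pascal ((n:ℤ)-x-2) k (by exact_mod_cast hk)
    rwa [show (n:ℤ)-x-2+1 = (n:ℤ)-x-1 from by ring] at h
  have hB : Cb (n:ℤ) ((x:ℤ)+1) * Cb ((n:ℤ)-x-1) k = Cb n k * Cb ((n:ℤ)-k) ((x:ℤ)+1) := by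
    rw [show ((x:ℤ)+1) = ((x+1:ℕ):ℤ) from by push_cast; ring,
        show (n:ℤ)-x-1 = ((n-(x+1):ℕ):ℤ) from by omega,
        show (n:ℤ)-k = ((n-k:ℕ):ℤ) from by omega,
        Cb_natCast, Cb_natCast, Cb_natCast, Cb_natCast]
    exact_mod_cast choose_inter n (x+1) k
  have hfb : Cb ((n:ℤ)-k) ((x:ℤ)+1) / Cb (n:ℤ) ((x:ℤ)+1) = Cb ((n:ℤ)-x-1) k / Cb n k := by
    rw [div_eq_div_iff hb ha]; linarith [hB]
  rw [hfb, hP]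
  have hx0 : (x:ℝ) ≠ 0 := Nat.cast_ne_zero.mpr (by omega)
  have hx1 : (x:ℝ) + 1 ≠ 0 := by positivity
  rw [show (x:ℝ)+1-1 = x by ring]
  field_simp
  ring

lemma base (n k : ℕ) (hk : 1 ≤ k) (hkn : k < n) : rr n k 0 1 = 0 := by
  rw [rr_zero, Finset.Icc_self, Finset.sum_singleton]
  push_cast
  have ha : Cb n k ≠ 0 := Cb_nk_ne n k hkn.le
  have hn : (n:ℝ) ≠ 0 := Nat.cast_ne_zero.mpr (by omega)
  have hP : Cb ((n:ℤ)-1) k = Cb ((n:ℤ)-1-1) k + Cb ((n:ℤ)-1-1) ((k:ℤ)-1) := by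
    have h := Cb_pascal ((n:ℤ)-1-1) k (by exact_mod_cast hk)
    rwa [show (n:ℤ)-1-1+1 = (n:ℤ)-1 from by ring] at h
  have hB : (n:ℝ) * Cb ((n:ℤ)-1) k = Cb n k * ((n:ℝ) - k) := by
    have h2 : ((n - k:ℕ):ℝ) = (n:ℝ) - k := by
      rw [Nat.cast_sub hkn.le]
    rw [← h2, show (n:ℤ)-1 = ((n-1:ℕ):ℤ) from by omega, Cb_natCast, Cb_natCast]
    have h := choose_inter n 1 k
    simp only [Nat.choose_one_right] at h
    exact_mod_cast h
  field_simp
  linear_combination (n:ℝ) * hP - hB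

theorem r_zero_eq_neg_sum (n k : ℕ) (hk : 1 ≤ k) (hkn : k < n) :
    ∀ x ∈ Finset.Icc 1 n, rr n k 0 x = -∑ j ∈ Finset.Icc 2 x, rr n k 1 j := by
  intro x hx
  rw [Finset.mem_Icc] at hx
  obtain ⟨hx1, hxn⟩ := hx
  revert hxn
  induction x, hx1 using Nat.le_induction with
  | base =>
    intro _
    rw [show Finset.Icc 2 1 = ∅ from Finset.Icc_eq_empty (by omega), Finset.sum_empty,
      neg_zero, base n k hk hkn]
  | succ m hm ih =>
    intro hmn
    rw [Finset.sum_Icc_succ_top (by omega : 2 ≤ m + 1), neg_add,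
      ← ih (by omega), step n k m hk hkn hm hmn]
    ring
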